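/- Fix an integer k ≥ 1, ε ∈ (0,1), and an integer x ≥ k. For each integer q ≥ 2 define p_s(q) = (1−ε) q^s (q^{k−s} − 1)/(q^k − 1) for 0 ≤ s ≤ k − 1. Then, as q → ∞, Σ_{(l_0,…,l_{k−1})} Π_{s=0}^{k−1} (1 − p_s(q))^{l_s − 1} p_s(q) → C(x−1, k−1) (1−ε)^k ε^{x−k}, where the sum is over all k-tuples of positive integers (l_0,…,l_{k−1}) with Σ_{s=0}^{k−1} l_s = x. (That is, the distribution of B = Σ_s L_s, the sum of independent geometric(p_s(q)) variables, converges pointwise to the negative binomial distribution of B̃ as the channel-input alphabet size q grows, which underlies the age-optimality of random codes for large q.) -/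

import Mathlib

open Filter

lemma card_antidiagonalTuple (k n : ℕ) :
    (Finset.Nat.antidiagonalTuple k n).card = (k + n - 1).choose n := by
  rw [← Finset.piAntidiag_univ_fin_eq_antidiagonalTuple,
    ← Finset.map_sym_eq_piAntidiag, Finset.card_map, Finset.sym_univ,
    Finset.card_univ, Sym.card_sym_eq_choose, Fintype.card_fin]

lemma sum_shift {k : ℕ} (l : Fin k → ℕ) (hpos : ∀ s : Fin k, 1 ≤ l s) :
    ∑ s : Fin k, l s = (∑ s : Fin k, (l s - 1)) + k := by
  calc ∑ s : Fin k, l s = ∑ s : Fin k, ((l s - 1) + 1) :=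
        Finset.sum_congr rfl fun s _ => by have := hpos s; omega
    _ = (∑ s : Fin k, (l s - 1)) + ∑ _s : Fin k, 1 := Finset.sum_add_distrib
    _ = (∑ s : Fin k, (l s - 1)) + k := by simp

lemma card_filtered (k x : ℕ) (hk : 1 ≤ k) (hx : k ≤ x) :
    ((Finset.Nat.antidiagonalTuple k x).filter (fun l => ∀ s : Fin k, 1 ≤ l s)).card
      = (x - 1).choose (k - 1) := by
  have key : ((Finset.Nat.antidiagonalTuple k x).filter (fun l => ∀ s : Fin k, 1 ≤ l s)).card
      = (Finset.Nat.antidiagonalTuple k (x - k)).card := by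
    refine Finset.card_nbij' (fun l => fun s => l s - 1) (fun l => fun s => l s + 1)
      ?_ ?_ ?_ ?_
    · intro l hl
      simp only [Finset.mem_coe, Finset.mem_filter, Finset.Nat.mem_antidiagonalTuple] at hl
      obtain ⟨hsum, hpos⟩ := hl
      simp only [Finset.mem_coe, Finset.Nat.mem_antidiagonalTuple]
      have := sum_shift l hpos
      omega
    · intro l hl
      rw [Finset.mem_coe, Finset.Nat.mem_antidiagonalTuple] at hl
      simp only [Finset.mem_coe, Finset.mem_filter, Finset.Nat.mem_antidiagonalTuple]
      refine ⟨?_, fun s => by omega⟩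
      rw [Finset.sum_add_distrib, hl]
      simp
      omega
    · intro l hl
      simp only [Finset.mem_coe, Finset.mem_filter] at hl
      funext s
      have := hl.2 s
      show l s - 1 + 1 = l s
      omega
    · intro l _
      funext s
      show l s + 1 - 1 = l s
      omega
  rw [key, card_antidiagonalTuple]
  clear key
  have h1 : k + (x - k) - 1 = x - 1 := by omega
  rw [h1, ← Nat.choose_symm (by omega : x - k ≤ x - 1)]
  congr 1
  omega

lemma p_tendsto (k : ℕ) (hk : 1 ≤ k) (ε : ℝ) (p : ℕ → ℕ → ℝ)
    (hp : ∀ q s : ℕ, p q s = (1 - ε) * (q : ℝ)^s * ((q : ℝ)^(k - s) - 1) / ((q : ℝ)^k - 1))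
    (s : ℕ) (hs : s < k) :
    Tendsto (fun q : ℕ => p q s) atTop (nhds (1 - ε)) := by
  have key : Tendsto (fun q : ℕ => ((q : ℝ)^k - (q : ℝ)^s) / ((q : ℝ)^k - 1)) atTop (nhds 1) := by
    have hnum : Tendsto (fun q : ℕ => (q : ℝ)^s / (q : ℝ)^k) atTop (nhds 0) :=
      (tendsto_pow_div_pow_atTop_zero hs).comp tendsto_natCast_atTop_atTop
    have hden : Tendsto (fun q : ℕ => ((q : ℝ)^k)⁻¹) atTop (nhds 0) :=
      (((tendsto_pow_atTop (by omega : k ≠ 0)).comp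
        tendsto_natCast_atTop_atTop)).inv_tendsto_atTop
    have ha : Tendsto (fun q : ℕ => (1 : ℝ) - (q : ℝ)^s / (q : ℝ)^k) atTop (nhds (1 - 0)) :=
      tendsto_const_nhds.sub hnum
    have hb : Tendsto (fun q : ℕ => (1 : ℝ) - ((q : ℝ)^k)⁻¹) atTop (nhds (1 - 0)) :=
      tendsto_const_nhds.sub hden
    have h2 := ha.div hb (by norm_num)
    have h2' : Tendsto (fun q : ℕ => ((1 : ℝ) - (q : ℝ)^s / (q : ℝ)^k) / (1 - ((q : ℝ)^k)⁻¹))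
        atTop (nhds 1) := by simpa [Pi.div_def] using h2
    apply h2'.congr'
    filter_upwards [eventually_ge_atTop 2] with q hq
    have hq2 : (2 : ℝ) ≤ (q : ℝ) := by exact_mod_cast hq
    have hqk : (1 : ℝ) < (q : ℝ)^k := by
      calc (1:ℝ) < 2 := by norm_num
      _ ≤ (q:ℝ) := hq2
      _ = (q:ℝ)^1 := (pow_one _).symm
      _ ≤ (q:ℝ)^k := pow_le_pow_right₀ (by linarith) hk
    have h0 : (q : ℝ)^k ≠ 0 := by positivity
    have h1 : (q : ℝ)^k - 1 ≠ 0 := by linarith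
    field_simp
  have heq : ∀ q : ℕ, p q s = (1 - ε) * (((q : ℝ)^k - (q : ℝ)^s) / ((q : ℝ)^k - 1)) := by
    intro q
    rw [hp q s, mul_assoc, mul_div_assoc]
    congr 2
    rw [mul_sub, mul_one, ← pow_add, Nat.add_sub_cancel' (le_of_lt hs)]
  have key2 : Tendsto (fun q : ℕ => (1 - ε) * (((q : ℝ)^k - (q : ℝ)^s) / ((q : ℝ)^k - 1)))
      atTop (nhds ((1 - ε) * 1)) := key.const_mul (1 - ε)
  rw [mul_one] at key2
  exact key2.congr fun q => (heq q).symm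

/-- As the alphabet size `q → ∞`, the distribution of `B = ∑_s L_s` (a sum of independent
geometric variables with success probabilities `p_s(q) = (1-ε) q^s (q^{k-s}-1)/(q^k-1)`)
converges pointwise to the negative binomial distribution: for each `x ≥ k`, the
probability `P(B = x)` — written as a sum over the compositions of `x` into `k` positive
parts of products of geometric probabilities — tends to `C(x-1, k-1)(1-ε)^k ε^{x-k}`. -/
theorem random_code_pointwise_limit (k : ℕ) (hk : 1 ≤ k) (ε : ℝ) (hε : ε ∈ Set.Ioo (0:ℝ) 1)
    (x : ℕ) (hx : k ≤ x)
    (p : ℕ → ℕ → ℝ)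
    (hp : ∀ q s : ℕ, p q s = (1 - ε) * (q : ℝ)^s * ((q : ℝ)^(k - s) - 1) / ((q : ℝ)^k - 1)) :
    Tendsto (fun q : ℕ =>
        ∑ l ∈ (Finset.Nat.antidiagonalTuple k x).filter (fun l => ∀ s : Fin k, 1 ≤ l s),
          ∏ s : Fin k, ((1 - p q (s : ℕ))^(l s - 1) * p q (s : ℕ)))
      atTop
      (nhds (((x - 1).choose (k - 1) : ℝ) * (1 - ε)^k * ε^(x - k))) := by
  set F := (Finset.Nat.antidiagonalTuple k x).filter (fun l => ∀ s : Fin k, 1 ≤ l s) with hF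
  have hterm : ∀ l ∈ F, Tendsto
      (fun q : ℕ => ∏ s : Fin k, ((1 - p q (s : ℕ))^(l s - 1) * p q (s : ℕ)))
      atTop (nhds ((1 - ε)^k * ε^(x - k))) := by
    intro l hl
    simp only [hF, Finset.mem_filter, Finset.Nat.mem_antidiagonalTuple] at hl
    obtain ⟨hsum, hpos⟩ := hl
    have hlim : Tendsto (fun q : ℕ => ∏ s : Fin k, ((1 - p q (s : ℕ))^(l s - 1) * p q (s : ℕ)))
        atTop (nhds (∏ s : Fin k, (ε^(l s - 1) * (1 - ε)))) := by
      apply tendsto_finset_prod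
      intro s _
      have hps := p_tendsto k hk ε p hp (s : ℕ) s.isLt
      have h1 : Tendsto (fun q : ℕ => 1 - p q (s : ℕ)) atTop (nhds ε) := by
        have := ((tendsto_const_nhds : Tendsto (fun _ : ℕ => (1:ℝ)) atTop (nhds 1)).sub hps)
        simpa using this
      exact (h1.pow (l s - 1)).mul hps
    have hprod : ∏ s : Fin k, (ε^(l s - 1) * (1 - ε)) = (1 - ε)^k * ε^(x - k) := by
      rw [Finset.prod_mul_distrib, Finset.prod_const, Finset.prod_pow_eq_pow_sum]
      have hsum2 : ∑ s : Fin k, (l s - 1) = x - k := by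
        have := sum_shift l hpos
        omega
      rw [hsum2]
      simp [mul_comm]
    rw [← hprod]
    exact hlim
  have hsumlim := tendsto_finset_sum F hterm
  have hcard : (F.card : ℝ) = ((x - 1).choose (k - 1) : ℝ) := by
    exact_mod_cast congrArg Nat.cast (card_filtered k x hk hx)
  convert hsumlim using 1
  rw [Finset.sum_const, nsmul_eq_mul, hcard, mul_assoc]
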